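/- For every natural number n ≥ 0, the quartered Aztec diamonds of orders 4n+1 and 4n+2 have no domino tilings: T(R(4n+1)) = 0 and T(R(4n+2)) = 0. -/

import Mathlib

open Finset

/-- A domino: a set of two cells sharing an edge. -/
def IsDomino (d : Finset (ℤ × ℤ)) : Prop :=
  ∃ c c' : ℤ × ℤ, |c.1 - c'.1| + |c.2 - c'.2| = 1 ∧ d = {c, c'}

/-- `P` is a tiling of the region `R`: a partition of `R` into dominoes. -/
def IsTiling (R : Set (ℤ × ℤ)) (P : Set (Finset (ℤ × ℤ))) : Prop :=
  (∀ d ∈ P, IsDomino d) ∧ P.PairwiseDisjoint id ∧ (⋃ d ∈ P, (d : Set (ℤ × ℤ))) = R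

/-- `T R`: the number of domino tilings of the region `R`. -/
noncomputable def numTilings (R : Set (ℤ × ℤ)) : ℕ :=
  Set.ncard {P : Set (Finset (ℤ × ℤ)) | IsTiling R P}

/-- The Aztec diamond of order `n`. -/
def AD (n : ℕ) : Set (ℤ × ℤ) :=
  {c | |2 * c.1 + 1| + |2 * c.2 + 1| ≤ 2 * (n : ℤ)}

/-- The quartered Aztec diamond `R(n)`. -/
def Rqad (n : ℕ) : Set (ℤ × ℤ) :=
  {c | c ∈ AD n ∧ 2 * ((c.1 + 1).fdiv 2) ≤ c.2 ∧ -2 * (c.1.fdiv 2) - 1 ≤ c.2}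

/-- The abutting quartered Aztec diamond `K_a(n)`. -/
def Ka (n : ℕ) : Set (ℤ × ℤ) :=
  {c | c ∈ AD n ∧ 2 * ((c.1 + 1).fdiv 2) ≤ c.2 ∧ -2 * ((c.1 + 1).fdiv 2) ≤ c.2}

/-- The non-abutting quartered Aztec diamond `K_na(n)`. -/
def Kna (n : ℕ) : Set (ℤ × ℤ) :=
  {c | c ∈ AD n ∧ -2 * ((c.1 + 1).fdiv 2) ≤ c.2 ∧ c.2 ≤ 2 * ((c.1 + 1).fdiv 2) - 1}

namespace QADproof

/-- The quarter-plane sector predicate (with `ediv` instead of `fdiv`). -/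
def q (c : ℤ × ℤ) : Prop := 2 * ((c.1 + 1) / 2) ≤ c.2 ∧ -2 * (c.1 / 2) - 1 ≤ c.2

lemma fdiv2 (x : ℤ) : x.fdiv 2 = x / 2 := Int.fdiv_eq_ediv_of_nonneg x (by norm_num)

lemma mem_Rqad (m : ℕ) (c : ℤ × ℤ) : c ∈ Rqad m ↔ c ∈ AD m ∧ q c := by
  simp only [Rqad, Set.mem_setOf_eq, q, fdiv2]

/-- Rotation of the plane by 90 degrees about the center `(-1/2, -1/2)`. -/
def e : (ℤ × ℤ) ≃ (ℤ × ℤ) where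
  toFun c := (c.2, -1 - c.1)
  invFun c := (-1 - c.2, c.1)
  left_inv c := by obtain ⟨a, b⟩ := c; simp [Prod.ext_iff]
  right_inv c := by obtain ⟨a, b⟩ := c; simp [Prod.ext_iff]

lemma e_symm_apply (c : ℤ × ℤ) : e.symm c = (-1 - c.2, c.1) := rfl

lemma AD_symm (m : ℕ) (c : ℤ × ℤ) : e.symm c ∈ AD m ↔ c ∈ AD m := by
  obtain ⟨a, b⟩ := c
  simp only [AD, e_symm_apply, Set.mem_setOf_eq, Int.abs_eq_natAbs]
  omega

lemma q_cover (c : ℤ × ℤ) :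
    q c ∨ q (e.symm c) ∨ q (e.symm (e.symm c)) ∨ q (e.symm (e.symm (e.symm c))) := by
  obtain ⟨a, b⟩ := c
  simp only [q, e_symm_apply]
  omega

lemma q_unique1 (c : ℤ × ℤ) (h : q c) : ¬ q (e.symm c) := by
  obtain ⟨a, b⟩ := c
  simp only [q, e_symm_apply] at *
  omega

lemma q_unique2 (c : ℤ × ℤ) (h : q c) : ¬ q (e.symm (e.symm c)) := by
  obtain ⟨a, b⟩ := c
  simp only [q, e_symm_apply] at *
  omega

lemma q_unique3 (c : ℤ × ℤ) (h : q c) : ¬ q (e.symm (e.symm (e.symm c))) := by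
  obtain ⟨a, b⟩ := c
  simp only [q, e_symm_apply] at *
  omega

/-! ### Counting the Aztec diamond -/

noncomputable def colAD (m : ℕ) (a : ℤ) : Finset (ℤ × ℤ) :=
  (Finset.Icc (max a (-a - 1) - m) ((m : ℤ) - 1 - max a (-a - 1))).image (fun b => (a, b))

noncomputable def ADfin (m : ℕ) : Finset (ℤ × ℤ) :=
  (Finset.range (2 * m)).biUnion (fun k => colAD m ((k : ℤ) - m))

lemma coe_ADfin (m : ℕ) : (↑(ADfin m) : Set (ℤ × ℤ)) = AD m := by
  ext ⟨a, b⟩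
  simp only [ADfin, colAD, Finset.coe_biUnion, Finset.mem_coe, Finset.mem_biUnion,
    Finset.mem_range, Finset.mem_image, Finset.mem_Icc, Set.mem_iUnion, AD,
    Set.mem_setOf_eq, Prod.mk.injEq, Int.abs_eq_natAbs, exists_prop]
  constructor
  · rintro ⟨k, hk, bb, hbb, rfl, rfl⟩
    omega
  · intro h
    exact ⟨(a + m).toNat, by omega, b, by omega, by omega, rfl⟩

lemma card_colAD (m : ℕ) (a : ℤ) :
    (colAD m a).card = (2 * (m : ℤ) - 2 * max a (-a - 1)).toNat := by
  rw [colAD, Finset.card_image_of_injective _ (fun x y hxy => by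
    simpa using hxy), Int.card_Icc]
  omega

lemma gauss (m : ℕ) : ∑ k ∈ Finset.range m, (2 * k + 2) = m * (m + 1) := by
  induction m with
  | zero => simp
  | succ p ih => rw [Finset.sum_range_succ, ih]; ring

lemma card_ADfin (m : ℕ) : (ADfin m).card = 2 * m * (m + 1) := by
  have hdisj : ∀ x ∈ Finset.range (2 * m), ∀ y ∈ Finset.range (2 * m), x ≠ y →
      Disjoint (colAD m ((x : ℤ) - m)) (colAD m ((y : ℤ) - m)) := by
    intro x _ y _ hxy
    rw [Finset.disjoint_left]
    rintro c hc hc'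
    simp only [colAD, Finset.mem_image] at hc hc'
    obtain ⟨u, _, rfl⟩ := hc
    obtain ⟨v, _, hv⟩ := hc'
    rw [Prod.mk.injEq] at hv
    exact hxy (by omega)
  rw [ADfin, Finset.card_biUnion hdisj]
  rw [Finset.range_eq_Ico, ← Finset.sum_Ico_consecutive _ (Nat.zero_le m) (by omega : m ≤ 2 * m)]
  have h1 : ∑ k ∈ Finset.Ico 0 m, (colAD m ((k : ℤ) - m)).card
      = ∑ k ∈ Finset.range m, (2 * k + 2) := by
    rw [← Finset.range_eq_Ico]
    refine Finset.sum_congr rfl (fun k hk => ?_)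
    rw [Finset.mem_range] at hk
    rw [card_colAD]
    omega
  have h2 : ∑ k ∈ Finset.Ico m (2 * m), (colAD m ((k : ℤ) - m)).card
      = ∑ k ∈ Finset.range m, (2 * k + 2) := by
    rw [Finset.sum_Ico_eq_sum_range]
    have h2m : 2 * m - m = m := by omega
    rw [h2m, ← Finset.sum_range_reflect]
    refine Finset.sum_congr rfl (fun k hk => ?_)
    rw [Finset.mem_range] at hk
    rw [card_colAD]
    omega
  rw [h1, h2, gauss]
  ring

lemma AD_finite (m : ℕ) : (AD m).Finite := by
  rw [← coe_ADfin]; exact (ADfin m).finite_toSet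

lemma ncard_AD (m : ℕ) : (AD m).ncard = 2 * m * (m + 1) := by
  rw [← coe_ADfin, Set.ncard_coe_finset, card_ADfin]

/-! ### The four-fold partition -/

lemma Rqad_subset_AD (m : ℕ) : Rqad m ⊆ AD m := fun c hc => ((mem_Rqad m c).1 hc).1

lemma Rqad_finite (m : ℕ) : (Rqad m).Finite := (AD_finite m).subset (Rqad_subset_AD m)

lemma four_mul_ncard (m : ℕ) : 4 * (Rqad m).ncard = 2 * m * (m + 1) := by
  set S := Rqad m with hS
  set B := e '' S with hBdef
  set C := e '' B with hCdef
  set D := e '' C with hDdef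
  have hmemB : ∀ c, c ∈ B ↔ e.symm c ∈ S := fun c => by
    rw [hBdef, Set.mem_image_equiv]
  have hmemC : ∀ c, c ∈ C ↔ e.symm (e.symm c) ∈ S := fun c => by
    rw [hCdef, Set.mem_image_equiv, hmemB]
  have hmemD : ∀ c, c ∈ D ↔ e.symm (e.symm (e.symm c)) ∈ S := fun c => by
    rw [hDdef, Set.mem_image_equiv, hmemC]
  have hunion : AD m = S ∪ B ∪ C ∪ D := by
    ext c
    constructor
    · intro hc
      rcases q_cover c with h | h | h | h
      · exact Or.inl (Or.inl (Or.inl ((mem_Rqad m c).2 ⟨hc, h⟩)))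
      · exact Or.inl (Or.inl (Or.inr ((hmemB c).2 ((mem_Rqad m _).2
          ⟨(AD_symm m c).2 hc, h⟩))))
      · exact Or.inl (Or.inr ((hmemC c).2 ((mem_Rqad m _).2
          ⟨(AD_symm m _).2 ((AD_symm m c).2 hc), h⟩)))
      · exact Or.inr ((hmemD c).2 ((mem_Rqad m _).2
          ⟨(AD_symm m _).2 ((AD_symm m _).2 ((AD_symm m c).2 hc)), h⟩))
    · rintro (((h | h) | h) | h)
      · exact Rqad_subset_AD m h
      · exact (AD_symm m c).1 (Rqad_subset_AD m ((hmemB c).1 h))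
      · exact (AD_symm m c).1 ((AD_symm m _).1 (Rqad_subset_AD m ((hmemC c).1 h)))
      · exact (AD_symm m c).1 ((AD_symm m _).1 ((AD_symm m _).1
          (Rqad_subset_AD m ((hmemD c).1 h))))
  have hqS : ∀ c, c ∈ S → q c := fun c hc => ((mem_Rqad m c).1 hc).2
  have hSB : Disjoint S B := Set.disjoint_left.mpr
    (fun c hc hc' => q_unique1 c (hqS c hc) (hqS _ ((hmemB c).1 hc')))
  have hSC : Disjoint S C := Set.disjoint_left.mpr
    (fun c hc hc' => q_unique2 c (hqS c hc) (hqS _ ((hmemC c).1 hc')))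
  have hSD : Disjoint S D := Set.disjoint_left.mpr
    (fun c hc hc' => q_unique3 c (hqS c hc) (hqS _ ((hmemD c).1 hc')))
  have hBC : Disjoint B C := Set.disjoint_left.mpr
    (fun c hc hc' => q_unique1 (e.symm c) (hqS _ ((hmemB c).1 hc))
      (hqS _ ((hmemC c).1 hc')))
  have hBD : Disjoint B D := Set.disjoint_left.mpr
    (fun c hc hc' => q_unique2 (e.symm c) (hqS _ ((hmemB c).1 hc))
      (hqS _ ((hmemD c).1 hc')))
  have hCD : Disjoint C D := Set.disjoint_left.mpr
    (fun c hc hc' => q_unique1 (e.symm (e.symm c))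
      (hqS _ ((hmemC c).1 hc)) (hqS _ ((hmemD c).1 hc')))
  have hSfin : S.Finite := Rqad_finite m
  have hBfin : B.Finite := hSfin.image _
  have hCfin : C.Finite := hBfin.image _
  have hDfin : D.Finite := hCfin.image _
  have hcard : (AD m).ncard = S.ncard + B.ncard + C.ncard + D.ncard := by
    rw [hunion]
    rw [Set.ncard_union_eq (by
        simp only [Set.disjoint_union_left]
        exact ⟨⟨hSD, hBD⟩, hCD⟩) ((hSfin.union hBfin).union hCfin) hDfin]
    rw [Set.ncard_union_eq (by
        simp only [Set.disjoint_union_left]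
        exact ⟨hSC, hBC⟩) (hSfin.union hBfin) hCfin]
    rw [Set.ncard_union_eq hSB hSfin hBfin]
  have hB : B.ncard = S.ncard := Set.ncard_image_of_injective _ e.injective
  have hC : C.ncard = B.ncard := Set.ncard_image_of_injective _ e.injective
  have hD : D.ncard = C.ncard := Set.ncard_image_of_injective _ e.injective
  rw [ncard_AD] at hcard
  rw [hC, hB] at hD
  rw [hB, hC, hB, hD] at hcard
  omega

/-! ### A tiled region has an even number of cells -/

lemma even_ncard_of_tiling {R : Set (ℤ × ℤ)} (hR : R.Finite)
    {P : Set (Finset (ℤ × ℤ))} (hP : IsTiling R P) : Even R.ncard := by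
  obtain ⟨hdom, hdisj, hcov⟩ := hP
  have hsub : ∀ d ∈ P, (↑d : Set (ℤ × ℤ)) ⊆ R := by
    intro d hd
    rw [← hcov]
    exact Set.subset_biUnion_of_mem hd
  have hPfin : P.Finite := by
    refine Set.Finite.subset (hR.toFinset.powerset.finite_toSet) (fun d hd => ?_)
    simp only [Finset.coe_powerset, Set.mem_preimage, Set.mem_powerset_iff,
      Finset.coe_subset]
    intro x hx
    exact hR.mem_toFinset.mpr (hsub d hd (by exact_mod_cast hx))
  set Q := hPfin.toFinset with hQdef
  have hcard2 : ∀ d ∈ Q, d.card = 2 := by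
    intro d hd
    rw [hQdef, Set.Finite.mem_toFinset] at hd
    obtain ⟨c, c', hcc, rfl⟩ := hdom d hd
    have hne : c ≠ c' := by
      intro h
      subst h
      simp at hcc
    exact Finset.card_pair hne
  have hRQ : R = ↑(Q.biUnion id) := by
    rw [← hcov]
    ext x
    simp [hQdef, Set.Finite.mem_toFinset]
  have hcb : (Q.biUnion id).card = ∑ d ∈ Q, d.card := by
    apply Finset.card_biUnion
    intro x hx y hy hxy
    exact hdisj (hPfin.mem_toFinset.mp hx) (hPfin.mem_toFinset.mp hy) hxy
  have : R.ncard = 2 * Q.card := by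
    rw [hRQ, Set.ncard_coe_finset, hcb, Finset.sum_congr rfl hcard2,
      Finset.sum_const, smul_eq_mul, mul_comm]
  rw [this]
  exact even_two_mul _

lemma numTilings_eq_zero_of_odd {R : Set (ℤ × ℤ)} (hR : R.Finite)
    (h : Odd R.ncard) : numTilings R = 0 := by
  have hempty : {P : Set (Finset (ℤ × ℤ)) | IsTiling R P} = ∅ := by
    ext P
    simp only [Set.mem_setOf_eq, Set.mem_empty_iff_false, iff_false]
    intro hP
    exact (Nat.not_even_iff_odd.mpr h) (even_ncard_of_tiling hR hP)
  rw [numTilings, hempty, Set.ncard_empty]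

end QADproof

/-- The quartered Aztec diamonds of orders `4n+1` and `4n+2` have no tilings. -/
theorem quartered_aztec_diamond_no_tilings (n : ℕ) :
    numTilings (Rqad (4 * n + 1)) = 0 ∧ numTilings (Rqad (4 * n + 2)) = 0 := by
  constructor
  · apply QADproof.numTilings_eq_zero_of_odd (QADproof.Rqad_finite _)
    have h4 := QADproof.four_mul_ncard (4 * n + 1)
    have hk : 2 * (4 * n + 1) * ((4 * n + 1) + 1) = 4 * (8 * n ^ 2 + 6 * n + 1) := by ring
    rw [hk] at h4
    have hx : (Rqad (4 * n + 1)).ncard = 8 * n ^ 2 + 6 * n + 1 :=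
      Nat.eq_of_mul_eq_mul_left (by norm_num) h4
    rw [hx]
    exact ⟨4 * n ^ 2 + 3 * n, by ring⟩
  · apply QADproof.numTilings_eq_zero_of_odd (QADproof.Rqad_finite _)
    have h4 := QADproof.four_mul_ncard (4 * n + 2)
    have hk : 2 * (4 * n + 2) * ((4 * n + 2) + 1) = 4 * (8 * n ^ 2 + 10 * n + 3) := by ring
    rw [hk] at h4
    have hx : (Rqad (4 * n + 2)).ncard = 8 * n ^ 2 + 10 * n + 3 :=
      Nat.eq_of_mul_eq_mul_left (by norm_num) h4
    rw [hx]
    exact ⟨4 * n ^ 2 + 5 * n + 1, by ring⟩
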